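/- Scattering time estimate for a repulsive short-range potential: there exists an absolute constant A > 0 with the following property. Let Φ : ℝ³∖{0} → [0,∞) be C², radial (Φ(x) = φ(|x|)) with φ nonincreasing, and Φ(x) = 0 for |x| ≥ 1. Let x : [0,∞) → ℝ³∖{0} be a C² solution of ẍ(t) = −∇Φ(x(t)) with |x(0)| = 1 and x(0)·ẋ(0) ≤ 0. Set V := |ẋ(0)| and ρ := |x(0) × ẋ(0)|/V (the impact parameter), and assume V > 0 and ρ > 0. Then the Lebesgue measure of the set {t ≥ 0 : |x(t)| ≤ 1} is at most A/(ρV). -/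

import Mathlib

open MeasureTheory Real
open scoped ENNReal RealInnerProductSpace

noncomputable section

/-- Three-dimensional Euclidean space. -/
abbrev V3 := EuclideanSpace ℝ (Fin 3)

/-- The Euclidean norm of the cross product of two vectors of `ℝ³`. -/
def crossNorm (a b : V3) : ℝ :=
  ‖(WithLp.equiv 2 (Fin 3 → ℝ)).symm
    (crossProduct (WithLp.equiv 2 (Fin 3 → ℝ) a) (WithLp.equiv 2 (Fin 3 → ℝ) b))‖

lemma crossNorm_sq (a b : V3) :
    crossNorm a b ^ 2 = (a 1 * b 2 - a 2 * b 1)^2 + (a 2 * b 0 - a 0 * b 2)^2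
      + (a 0 * b 1 - a 1 * b 0)^2 := by
  rw [crossNorm, EuclideanSpace.norm_eq, Real.sq_sqrt (by positivity)]
  simp [cross_apply, Fin.sum_univ_three]

lemma lagrange_identity (a b : V3) :
    ‖a‖^2 * ‖b‖^2 = ⟪a, b⟫^2 + crossNorm a b ^ 2 := by
  rw [crossNorm_sq, ← real_inner_self_eq_norm_sq, ← real_inner_self_eq_norm_sq]
  simp only [PiLp.inner_apply, RCLike.inner_apply, conj_trivial, Fin.sum_univ_three]
  ring

lemma hasFDerivAt_norm' (y : V3) (hy : y ≠ 0) :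
    HasFDerivAt (fun z : V3 => ‖z‖) (innerSL ℝ (‖y‖⁻¹ • y)) y := by
  have hr : (0:ℝ) < ‖y‖ := norm_pos_iff.mpr hy
  have h1 : HasFDerivAt (fun z : V3 => ‖z‖ ^ 2) (2 • (innerSL ℝ y)) y :=
    (hasStrictFDerivAt_norm_sq y).hasFDerivAt
  have h2 : HasDerivAt Real.sqrt (1 / (2 * Real.sqrt (‖y‖^2))) (‖y‖^2) :=
    Real.hasDerivAt_sqrt (by positivity)
  have h3 := h2.comp_hasFDerivAt y h1
  have h4 : (fun z : V3 => Real.sqrt (‖z‖^2)) = fun z : V3 => ‖z‖ := by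
    funext z; exact Real.sqrt_sq (norm_nonneg z)
  rw [← h4]
  refine h3.congr_fderiv ?_
  ext u
  rw [Real.sqrt_sq (norm_nonneg y)]
  simp only [ContinuousLinearMap.smul_apply, ContinuousLinearMap.coe_smul',
    Pi.smul_apply, innerSL_apply_apply, smul_eq_mul]
  rw [real_inner_smul_left]
  field_simp
  ring

lemma radial_gradient (Φ : V3 → ℝ) (φ : ℝ → ℝ)
    (hΦ : ContDiffOn ℝ 2 Φ {(0:V3)}ᶜ) (hrad : ∀ z : V3, Φ z = φ ‖z‖)
    (hmono : ∀ r s : ℝ, 0 < r → r ≤ s → φ s ≤ φ r)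
    (y : V3) (hy : y ≠ 0) : ∃ c : ℝ, c ≤ 0 ∧ HasGradientAt Φ (c • y) y := by
  have hr : (0:ℝ) < ‖y‖ := norm_pos_iff.mpr hy
  set r : ℝ := ‖y‖ with hrdef
  set e : V3 := r⁻¹ • y with hedef
  have he : ‖e‖ = 1 := by
    rw [hedef, norm_smul, Real.norm_eq_abs, abs_of_pos (inv_pos.mpr hr)]
    exact inv_mul_cancel₀ hr.ne'
  have hre : r • e = y := by
    rw [hedef, smul_smul, mul_inv_cancel₀ hr.ne', one_smul]
  have hΦdiff : DifferentiableAt ℝ Φ y :=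
    (hΦ.contDiffAt (IsOpen.mem_nhds isOpen_compl_singleton hy)).differentiableAt
      (by norm_num)
  set D : V3 →L[ℝ] ℝ := fderiv ℝ Φ y with hDdef
  have hD : HasFDerivAt Φ D y := hΦdiff.hasFDerivAt
  set m : ℝ := D e with hmdef
  set ψ : ℝ → ℝ := fun s => Φ (s • e) with hψdef
  have hψr : ∀ s : ℝ, 0 < s → ψ s = φ s := by
    intro s hs
    rw [hψdef]
    simp only
    rw [hrad, norm_smul, he, mul_one, Real.norm_eq_abs, abs_of_pos hs]
  have hsmul : HasDerivAt (fun s : ℝ => s • e) e r := by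
    simpa using (hasDerivAt_id r).smul_const e
  have hψ : HasDerivAt ψ m r := by
    have hD' : HasFDerivAt Φ D (r • e) := by rw [hre]; exact hD
    exact hD'.comp_hasDerivAt r hsmul
  have hm : m ≤ 0 := by
    have h := hψ.hasDerivWithinAt (s := Set.Ioi r)
    rw [hasDerivWithinAt_iff_tendsto_slope,
      Set.diff_singleton_eq_self (by simp : r ∉ Set.Ioi r)] at h
    refine le_of_tendsto h ?_
    filter_upwards [self_mem_nhdsWithin] with s hs
    have hs' : r < s := hs
    rw [slope_def_field]
    apply div_nonpos_of_nonpos_of_nonneg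
    · rw [hψr s (hr.trans hs'), hψr r hr, sub_nonpos]
      exact hmono r s hr hs'.le
    · exact sub_nonneg.mpr hs'.le
  -- the norm composition
  have hnorm : HasFDerivAt (fun z : V3 => ‖z‖) (innerSL ℝ e) y := hasFDerivAt_norm' y hy
  have hcomp : HasFDerivAt (fun z : V3 => ψ ‖z‖) (m • innerSL ℝ e) y := by
    have := hψ.comp_hasFDerivAt y hnorm
    exact this
  have hEq : (fun z : V3 => ψ ‖z‖) =ᶠ[nhds y] Φ := by
    filter_upwards [IsOpen.mem_nhds isOpen_compl_singleton hy] with z hz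
    have hz' : (0:ℝ) < ‖z‖ := norm_pos_iff.mpr hz
    rw [hψr ‖z‖ hz', hrad z]
  have hΦ' : HasFDerivAt Φ (m • innerSL ℝ e) y := hcomp.congr_of_eventuallyEq hEq.symm
  refine ⟨m / r, div_nonpos_of_nonpos_of_nonneg hm hr.le, ?_⟩
  rw [hasGradientAt_iff_hasFDerivAt]
  refine hΦ'.congr_fderiv ?_
  ext u
  simp only [InnerProductSpace.toDual_apply_apply, ContinuousLinearMap.coe_smul',
    Pi.smul_apply, innerSL_apply_apply, smul_eq_mul, hedef]
  rw [real_inner_smul_left, real_inner_smul_left]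
  field_simp

/-- Scattering time estimate for a repulsive short-range potential: there is an
absolute constant `A > 0` such that, for any radial nonincreasing `C²` potential
`Φ ≥ 0` supported in the unit ball, any solution of `ẍ = −∇Φ(x)` entering the unit
sphere with speed `V > 0` and impact parameter `ρ > 0` spends a total time at most
`A/(ρV)` within interaction range. -/
theorem scattering_time_estimate :
    ∃ A : ℝ, 0 < A ∧
      ∀ (Φ : V3 → ℝ) (φ : ℝ → ℝ),
        ContDiffOn ℝ 2 Φ {(0 : V3)}ᶜ →
        (∀ x : V3, Φ x = φ ‖x‖) →
        (∀ r s : ℝ, 0 < r → r ≤ s → φ s ≤ φ r) →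
        (∀ x : V3, x ≠ 0 → 0 ≤ Φ x) →
        (∀ x : V3, 1 ≤ ‖x‖ → Φ x = 0) →
        ∀ (x v : ℝ → V3),
          (∀ t : ℝ, 0 ≤ t → x t ≠ 0) →
          (∀ t : ℝ, 0 ≤ t → HasDerivAt x (v t) t) →
          (∀ t : ℝ, 0 ≤ t → HasDerivAt v (-gradient Φ (x t)) t) →
          ‖x 0‖ = 1 →
          ⟪x 0, v 0⟫ ≤ 0 →
          ∀ (V ρ : ℝ), V = ‖v 0‖ → ρ = crossNorm (x 0) (v 0) / V →
            0 < V → 0 < ρ →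
            volume {t : ℝ | 0 ≤ t ∧ ‖x t‖ ≤ 1} ≤ ENNReal.ofReal (A / (ρ * V)) := by
  refine ⟨Real.pi, Real.pi_pos, ?_⟩
  intro Φ φ hΦ hrad hmono hΦnn hΦsupp x v hx0 hx' hv' hxnorm hxv0 V ρ hV hρ hVpos hρpos
  set a : ℝ := ρ * V with hadef
  have hapos : 0 < a := mul_pos hρpos hVpos
  have hcross0 : crossNorm (x 0) (v 0) = a := by
    rw [hadef, hρ]; field_simp
  -- radial gradient along the trajectory
  have hradial : ∀ t : ℝ, ∃ c : ℝ, c ≤ 0 ∧ (0 ≤ t → HasGradientAt Φ (c • x t) (x t)) := by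
    intro t
    by_cases ht : 0 ≤ t
    · obtain ⟨c, hc1, hc2⟩ := radial_gradient Φ φ hΦ hrad hmono (x t) (hx0 t ht)
      exact ⟨c, hc1, fun _ => hc2⟩
    · exact ⟨0, le_refl 0, fun h => absurd h ht⟩
  choose c hc1 hc2 using hradial
  have hv'' : ∀ t, 0 ≤ t → HasDerivAt v (-(c t • x t)) t := by
    intro t ht
    have := hv' t ht
    rwa [(hc2 t ht).gradient] at this
  -- component derivatives
  have hxc : ∀ (i : Fin 3) (t : ℝ), 0 ≤ t → HasDerivAt (fun s => x s i) (v t i) t := by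
    intro i t ht
    exact (EuclideanSpace.proj (𝕜 := ℝ) i).hasFDerivAt.comp_hasDerivAt t (hx' t ht)
  have hvc : ∀ (i : Fin 3) (t : ℝ), 0 ≤ t →
      HasDerivAt (fun s => v s i) (-(c t * x t i)) t := by
    intro i t ht
    exact (EuclideanSpace.proj (𝕜 := ℝ) i).hasFDerivAt.comp_hasDerivAt t (hv'' t ht)
  -- angular momentum components are constant
  have hLconst : ∀ (i j : Fin 3) (t : ℝ), 0 ≤ t →
      x t i * v t j - x t j * v t i = x 0 i * v 0 j - x 0 j * v 0 i := by
    intro i j t ht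
    have hder : ∀ s : ℝ, 0 ≤ s →
        HasDerivAt (fun s => x s i * v s j - x s j * v s i) 0 s := by
      intro s hs
      have h1 := ((hxc i s hs).mul (hvc j s hs)).sub ((hxc j s hs).mul (hvc i s hs))
      refine h1.congr_deriv ?_
      ring
    exact constant_of_has_deriv_right_zero
      (fun s hs => (hder s hs.1).continuousAt.continuousWithinAt)
      (fun s hs => (hder s hs.1).hasDerivWithinAt) t (Set.right_mem_Icc.mpr ht)
  have hcrossconst : ∀ t : ℝ, 0 ≤ t → crossNorm (x t) (v t) ^ 2 = a ^ 2 := by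
    intro t ht
    rw [crossNorm_sq, hLconst 1 2 t ht, hLconst 2 0 t ht, hLconst 0 1 t ht,
      ← crossNorm_sq, hcross0]
  -- radial velocity g and its derivative
  set g : ℝ → ℝ := fun t => ⟪x t, v t⟫ with hgdef
  have hg' : ∀ t : ℝ, 0 ≤ t → HasDerivAt g (‖v t‖^2 - c t * ‖x t‖^2) t := by
    intro t ht
    have h1 := HasDerivAt.inner ℝ (hx' t ht) (hv'' t ht)
    refine h1.congr_deriv ?_
    rw [inner_neg_right, real_inner_smul_right, real_inner_self_eq_norm_sq,
      real_inner_self_eq_norm_sq]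
    ring
  have hg'nn : ∀ t : ℝ, 0 ≤ t → 0 ≤ ‖v t‖^2 - c t * ‖x t‖^2 := by
    intro t ht
    have h2 : c t * ‖x t‖^2 ≤ 0 :=
      mul_nonpos_of_nonpos_of_nonneg (hc1 t) (by positivity)
    nlinarith [sq_nonneg ‖v t‖]
  -- g is monotone on [0, ∞)
  have hgmono : MonotoneOn g (Set.Ici 0) := by
    apply monotoneOn_of_deriv_nonneg (convex_Ici 0)
    · exact fun s hs => (hg' s hs).continuousAt.continuousWithinAt
    · intro s hs
      rw [interior_Ici] at hs
      exact (hg' s (le_of_lt hs)).differentiableAt.differentiableWithinAt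
    · intro s hs
      rw [interior_Ici] at hs
      rw [(hg' s (le_of_lt hs)).deriv]
      exact hg'nn s (le_of_lt hs)
  -- q = ‖x‖² and its derivative
  set q : ℝ → ℝ := fun t => ‖x t‖^2 with hqdef
  have hq' : ∀ t : ℝ, 0 ≤ t → HasDerivAt q (2 * g t) t := by
    intro t ht
    exact (hx' t ht).norm_sq
  have hq0 : q 0 = 1 := by rw [hqdef]; simp [hxnorm]
  -- interval property: the in-range set is an initial segment
  have hint : ∀ t₁ : ℝ, 0 ≤ t₁ → ‖x t₁‖ ≤ 1 → ∀ s : ℝ, 0 ≤ s → s ≤ t₁ → ‖x s‖ ≤ 1 := by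
    intro t₁ ht₁ hxt₁ s hs hst
    by_contra hcon
    push_neg at hcon
    have hqs : 1 < q s := by
      rw [hqdef]; simp only; nlinarith
    have hs0 : 0 < s := by
      rcases eq_or_lt_of_le hs with h | h
      · exfalso; rw [← h] at hqs; rw [hq0] at hqs; exact lt_irrefl 1 hqs
      · exact h
    obtain ⟨σ, hσmem, hσ⟩ := exists_hasDerivAt_eq_slope q (fun t => 2 * g t) hs0
      (fun τ hτ => (hq' τ hτ.1).continuousAt.continuousWithinAt)
      (fun τ hτ => hq' τ hτ.1.le)
    have hgσ : 0 < g σ := by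
      have h2 : 0 < (q s - q 0) / (s - 0) := by
        apply div_pos <;> linarith
      rw [← hσ] at h2
      linarith
    have hσt₁ : σ ≤ t₁ := le_trans hσmem.2.le hst
    have hqmono : MonotoneOn q (Set.Icc σ t₁) := by
      apply monotoneOn_of_deriv_nonneg (convex_Icc σ t₁)
      · exact fun τ hτ =>
          (hq' τ (hσmem.1.le.trans hτ.1)).continuousAt.continuousWithinAt
      · intro τ hτ
        rw [interior_Icc] at hτ
        exact (hq' τ (hσmem.1.le.trans hτ.1.le)).differentiableAt.differentiableWithinAt
      · intro τ hτ
        rw [interior_Icc] at hτ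
        rw [(hq' τ (hσmem.1.le.trans hτ.1.le)).deriv]
        have hgτ : g σ ≤ g τ :=
          hgmono (Set.mem_Ici.mpr hσmem.1.le)
            (Set.mem_Ici.mpr (hσmem.1.le.trans hτ.1.le)) hτ.1.le
        linarith
    have hqst : q s ≤ q t₁ :=
      hqmono ⟨hσmem.2.le, hst⟩ ⟨hσt₁, le_refl t₁⟩ hst
    have hqt₁ : q t₁ ≤ 1 := by
      rw [hqdef]; simp only; nlinarith [norm_nonneg (x t₁)]
    linarith
  -- key time bound via arctan
  have hkey : ∀ t₁ : ℝ, 0 ≤ t₁ → ‖x t₁‖ ≤ 1 → t₁ ≤ π / a := by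
    intro t₁ ht₁ hxt₁
    have hin : ∀ τ : ℝ, 0 ≤ τ → τ ≤ t₁ → ‖x τ‖ ≤ 1 := hint t₁ ht₁ hxt₁
    set h : ℝ → ℝ := fun t => Real.arctan (g t / a) - a * t with hhdef
    have hh' : ∀ τ : ℝ, 0 ≤ τ → HasDerivAt h
        (1 / (1 + (g τ / a)^2) * ((‖v τ‖^2 - c τ * ‖x τ‖^2) / a) - a * 1) τ := by
      intro τ hτ
      exact ((Real.hasDerivAt_arctan (g τ / a)).comp τ ((hg' τ hτ).div_const a)).sub
        ((hasDerivAt_id τ).const_mul a)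
    have hh'ge : ∀ τ : ℝ, 0 ≤ τ → τ ≤ t₁ →
        0 ≤ 1 / (1 + (g τ / a)^2) * ((‖v τ‖^2 - c τ * ‖x τ‖^2) / a) - a * 1 := by
      intro τ hτ hτ₁
      have hx1 : ‖x τ‖ ≤ 1 := hin τ hτ hτ₁
      have hG : g τ^2 + a^2 ≤ ‖v τ‖^2 - c τ * ‖x τ‖^2 := by
        have hl := lagrange_identity (x τ) (v τ)
        have hcc := hcrossconst τ hτ
        have hx2 : ‖x τ‖^2 ≤ 1 := by nlinarith [norm_nonneg (x τ)]
        have h1 : ‖x τ‖^2 * ‖v τ‖^2 ≤ ‖v τ‖^2 := by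
          nlinarith [mul_nonneg (sub_nonneg.mpr hx2) (sq_nonneg ‖v τ‖)]
        have h2 : c τ * ‖x τ‖^2 ≤ 0 :=
          mul_nonpos_of_nonpos_of_nonneg (hc1 τ) (by positivity)
        have h3 : g τ^2 + a^2 ≤ ‖x τ‖^2 * ‖v τ‖^2 := by
          rw [hgdef]; simp only; nlinarith
        linarith
      set G : ℝ := ‖v τ‖^2 - c τ * ‖x τ‖^2 with hGdef
      have he1 : 1 / (1 + (g τ / a)^2) * (G / a) = G * a / (a^2 + g τ^2) := by
        field_simp
      rw [he1, sub_nonneg, mul_one, le_div_iff₀ (by positivity)]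
      nlinarith
    have hhmono : MonotoneOn h (Set.Icc 0 t₁) := by
      apply monotoneOn_of_deriv_nonneg (convex_Icc 0 t₁)
      · exact fun τ hτ => (hh' τ hτ.1).continuousAt.continuousWithinAt
      · intro τ hτ
        rw [interior_Icc] at hτ
        exact (hh' τ hτ.1.le).differentiableAt.differentiableWithinAt
      · intro τ hτ
        rw [interior_Icc] at hτ
        rw [(hh' τ hτ.1.le).deriv]
        exact hh'ge τ hτ.1.le hτ.2.le
    have h01 : h 0 ≤ h t₁ :=
      hhmono (Set.left_mem_Icc.mpr ht₁) (Set.right_mem_Icc.mpr ht₁) ht₁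
    rw [hhdef] at h01
    simp only [mul_zero, sub_zero] at h01
    have hb1 : Real.arctan (g t₁ / a) < π / 2 := Real.arctan_lt_pi_div_two _
    have hb2 : -(π / 2) < Real.arctan (g 0 / a) := Real.neg_pi_div_two_lt_arctan _
    have hat : a * t₁ ≤ π := by linarith
    rw [le_div_iff₀ hapos]
    linarith
  have hsub : {t : ℝ | 0 ≤ t ∧ ‖x t‖ ≤ 1} ⊆ Set.Icc 0 (π / a) :=
    fun t ht => ⟨ht.1, hkey t ht.1 ht.2⟩
  calc volume {t : ℝ | 0 ≤ t ∧ ‖x t‖ ≤ 1} ≤ volume (Set.Icc 0 (π / a)) :=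
        measure_mono hsub
    _ = ENNReal.ofReal (π / a - 0) := Real.volume_Icc
    _ = ENNReal.ofReal (π / (ρ * V)) := by rw [sub_zero, hadef]
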